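/- Let q be a prime power, let n, m be positive integers with n | m, and let σ : x ↦ x^{q^s} with gcd(s,m)=1. Let 𝒞 be a set of σ-linearized polynomials over F_{q^m}, let β ∈ F_{q^m}^*, let α_1,…,α_n be an F_q-basis of βF_{q^n}, let C = {(g(α_1),…,g(α_n)) : g ∈ 𝒞} ⊆ F_{q^m}^n, and let d be its minimum rank distance. Suppose there is a positive integer t such that: (1) n−d+1 ≤ t ≤ n−⌊(d−1)/2⌋−1; (2) t | n and t ≤ n−1; (3) { a x^{σ^j} : a ∈ F_{q^m} } ⊆ 𝒞 for some integer j with 0 ≤ j < n−t. Then there exists a word w ∈ F_{q^m}^n ∖ C such that |C ∩ B_{n−t}(w)| ≥ (q^n−1)/(q^t−1). -/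

import Mathlib

open Polynomial

section Aux
variable {Fq K : Type} [Field Fq] [Fintype Fq] [Field K] [Fintype K] [Algebra Fq K]

theorem aux_add_pow (x y : K) (r : ℕ) :
    (x + y) ^ (Fintype.card Fq) ^ r = x ^ (Fintype.card Fq) ^ r + y ^ (Fintype.card Fq) ^ r := by
  obtain ⟨k, hp, hq⟩ := FiniteField.card Fq (ringChar Fq)
  haveI : Fact (ringChar Fq).Prime := ⟨hp⟩
  haveI : CharP K (ringChar Fq) :=
    charP_of_injective_algebraMap (algebraMap Fq K).injective _
  simp only [hq, ← pow_mul]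
  exact add_pow_char_pow x y (ringChar Fq) (↑k * r)

/-- `x ↦ x ^ q ^ r` as an `Fq`-linear map on `K`. -/
noncomputable def powL (Fq K : Type) [Field Fq] [Fintype Fq] [Field K] [Fintype K]
    [Algebra Fq K] (r : ℕ) : K →ₗ[Fq] K where
  toFun x := x ^ (Fintype.card Fq) ^ r
  map_add' x y := aux_add_pow x y r
  map_smul' c x := by
    simp only [Algebra.smul_def, mul_pow, RingHom.id_apply]
    rw [← map_pow, FiniteField.pow_card_pow]

@[simp] theorem powL_apply (r : ℕ) (x : K) :
    powL Fq K r x = x ^ (Fintype.card Fq) ^ r := rfl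

theorem powL_injective (r : ℕ) : Function.Injective (powL Fq K r) := by
  intro x y h
  obtain ⟨k, hp, hq⟩ := FiniteField.card Fq (ringChar Fq)
  haveI : Fact (ringChar Fq).Prime := ⟨hp⟩
  haveI : CharP K (ringChar Fq) :=
    charP_of_injective_algebraMap (algebraMap Fq K).injective _
  simp only [powL_apply] at h
  rw [hq, ← pow_mul] at h
  have h2 : (x - y) ^ (ringChar Fq) ^ (↑k * r) = 0 := by
    rw [sub_pow_char_pow, h, sub_self]
  have := pow_eq_zero_iff (pow_ne_zero _ hp.ne_zero) |>.mp h2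
  exact sub_eq_zero.mp this

theorem card_root_le {D : ℕ} (hD0 : 0 < D) (a : K) :
    Set.ncard {x : K | x ^ D = a} ≤ D := by
  classical
  have hne : (X ^ D - C a : K[X]) ≠ 0 := X_pow_sub_C_ne_zero hD0 a
  have hsub : {x : K | x ^ D = a} ⊆ ((X ^ D - C a : K[X]).roots.toFinset : Finset K) := by
    intro x hx
    simp only [Finset.coe_sort_coe, Finset.mem_coe, Multiset.mem_toFinset,
      Polynomial.mem_roots hne, IsRoot.def, eval_sub, eval_pow, eval_X, eval_C, sub_eq_zero]
    exact hx
  calc Set.ncard {x : K | x ^ D = a} ≤ Set.ncard ((X ^ D - C a : K[X]).roots.toFinset : Set K) :=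
        Set.ncard_le_ncard hsub (Set.toFinite _)
    _ = ((X ^ D - C a : K[X]).roots.toFinset).card := Set.ncard_coe_finset _
    _ ≤ Multiset.card (X ^ D - C a : K[X]).roots := Multiset.toFinset_card_le _
    _ ≤ (X ^ D - C a : K[X]).natDegree := Polynomial.card_roots' _
    _ = D := natDegree_X_pow_sub_C

theorem card_root_one_ge {K : Type} [Field K] [Fintype K] {D : ℕ} (hD0 : 0 < D)
    (hD : D ∣ Fintype.card K - 1) : D ≤ Set.ncard {x : K | x ^ D = 1} := by
  classical
  obtain ⟨g, hg⟩ := IsCyclic.exists_generator (α := Kˣ)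
  have hord : orderOf g = Nat.card Kˣ := orderOf_eq_card_of_forall_mem_zpowers hg
  have hdvd : D ∣ Nat.card Kˣ := by
    rwa [Nat.card_eq_fintype_card, Fintype.card_units]
  have hN0 : Nat.card Kˣ ≠ 0 := Nat.card_pos.ne'
  set h := g ^ (Nat.card Kˣ / D) with hh
  have hordh : orderOf h = D := by
    rw [hh, orderOf_pow, hord, Nat.gcd_eq_right (Nat.div_dvd_of_dvd hdvd),
      Nat.div_div_self hdvd hN0]
  have hsub : (Units.val '' ((Subgroup.zpowers h : Subgroup Kˣ) : Set Kˣ)) ⊆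
      {x : K | x ^ D = 1} := by
    rintro _ ⟨u, hu, rfl⟩
    obtain ⟨k, rfl⟩ := Subgroup.mem_zpowers_iff.mp hu
    have : (h ^ k) ^ (D : ℤ) = 1 := by
      rw [← zpow_mul, mul_comm, zpow_mul]
      norm_cast
      rw [← hordh, pow_orderOf_eq_one, one_zpow]
    have h1 : ((h ^ k) ^ D : Kˣ) = 1 := by exact_mod_cast this
    simp only [Set.mem_setOf_eq]
    calc ((h ^ k : Kˣ) : K) ^ D = (((h ^ k) ^ D : Kˣ) : K) := by
          rw [Units.val_pow_eq_pow_val]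
      _ = 1 := by rw [h1, Units.val_one]
  calc D = orderOf h := hordh.symm
    _ = Nat.card (Subgroup.zpowers h) := (Nat.card_zpowers h).symm
    _ = Set.ncard ((Subgroup.zpowers h : Subgroup Kˣ) : Set Kˣ) := Nat.card_coe_set_eq _
    _ = Set.ncard (Units.val '' ((Subgroup.zpowers h : Subgroup Kˣ) : Set Kˣ)) :=
        (Set.ncard_image_of_injective _ Units.val_injective).symm
    _ ≤ Set.ncard {x : K | x ^ D = 1} := Set.ncard_le_ncard hsub (Set.toFinite _)

end Aux

/-- Rank weight of a vector `v ∈ K^n` over `F_q`. -/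
noncomputable def rkw (Fq : Type) [Field Fq] {K : Type} [Field K] [Algebra Fq K] {n : ℕ}
    (v : Fin n → K) : ℕ :=
  Module.finrank Fq ↥(Submodule.span Fq (Set.range v))

/-- Ball of radius `t` around `w` in the rank metric. -/
def ball (Fq : Type) [Field Fq] {K : Type} [Field K] [Algebra Fq K] {n : ℕ}
    (w : Fin n → K) (t : ℕ) : Set (Fin n → K) :=
  {c : Fin n → K | rkw Fq (w - c) ≤ t}

/-- Minimum rank distance of a code `C ⊆ K^n`. -/
noncomputable def minDist (Fq : Type) [Field Fq] {K : Type} [Field K] [Algebra Fq K] {n : ℕ}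
    (C : Set (Fin n → K)) : ℕ :=
  sInf {r : ℕ | ∃ u ∈ C, ∃ v ∈ C, u ≠ v ∧ rkw Fq (u - v) = r}

theorem stmt_12 (q s n m t j : ℕ) (Fq K : Type) [Field Fq] [Fintype Fq] [Field K]
    [Fintype K] [Algebra Fq K]
    (hcard : Fintype.card Fq = q) (hfin : Module.finrank Fq K = m)
    (hn : 0 < n) (hnm : n ∣ m) (hs : Nat.gcd s m = 1)
    (𝒞 : Set (K → K))
    (hlin : ∀ f ∈ 𝒞, ∃ N : ℕ, ∃ a : Fin N → K, ∀ x : K,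
      f x = ∑ i : Fin N, a i * x ^ ((q ^ s) ^ (i : ℕ)))
    (β : K) (hβ : β ≠ 0)
    (α : Fin n → K) (hα : LinearIndependent Fq α)
    (hspan : (Submodule.span Fq (Set.range α) : Set K)
      = (fun y : K => β * y) '' {x : K | x ^ q ^ n = x})
    (C : Set (Fin n → K)) (hC : C = (fun g : K → K => fun i : Fin n => g (α i)) '' 𝒞)
    (d : ℕ) (hd : d = minDist Fq C)
    (ht0 : 0 < t)
    (ht1 : (n : ℤ) - d + 1 ≤ (t : ℤ))
    (ht2 : (t : ℤ) ≤ (n : ℤ) - (((d - 1) / 2 : ℕ) : ℤ) - 1)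
    (htn : t ∣ n) (htn1 : t ≤ n - 1)
    (hj : (j : ℤ) < (n : ℤ) - (t : ℤ))
    (hGab : {f : K → K | ∃ a : K, ∀ x : K, f x = a * x ^ ((q ^ s) ^ j)} ⊆ 𝒞) :
    ∃ w : Fin n → K, w ∉ C ∧
      (q ^ n - 1) / (q ^ t - 1) ≤ Nat.card ↥(C ∩ ball Fq w (n - t)) := by
  classical
  haveI : Module.Finite Fq K := Module.Finite.of_finite (R := Fq) (M := K)
  have hq1 : 1 < q := hcard ▸ Fintype.one_lt_card
  have hq0 : 0 < q := lt_trans one_pos hq1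
  have hcardK : Fintype.card K = q ^ m := by
    rw [Module.card_eq_pow_finrank (K := Fq) (V := K), hcard, hfin]
  have hm0 : 0 < m := by
    rcases Nat.eq_zero_or_pos m with hm | hm
    · exfalso
      rw [hm, pow_zero] at hcardK
      exact absurd (hcardK ▸ Fintype.one_lt_card (α := K)) (lt_irrefl 1)
    · exact hm
  have htm : t ∣ m := htn.trans hnm
  have htln : t < n := lt_of_le_of_lt htn1 (Nat.sub_lt hn one_pos)
  have htn' : t ≤ n := htln.le
  -- powers
  set P : ℕ := (q ^ s) ^ j with hPdef
  have hP : P = q ^ (s * j) := (pow_mul q s j).symm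
  set Lβ : K := β ^ P with hLβdef
  have hLβ : Lβ ≠ 0 := pow_ne_zero _ hβ
  -- divisibilities
  have hdvd_tm : q ^ t - 1 ∣ q ^ m - 1 := by
    obtain ⟨k, hk⟩ := htm
    rw [hk, pow_mul]
    simpa using Nat.sub_dvd_pow_sub_pow (q ^ t) 1 k
  have hdvd_nm : q ^ n - 1 ∣ q ^ m - 1 := by
    obtain ⟨k, hk⟩ := hnm
    rw [hk, pow_mul]
    simpa using Nat.sub_dvd_pow_sub_pow (q ^ n) 1 k
  have hqt1 : 0 < q ^ t - 1 := by
    have : 1 < q ^ t := one_lt_pow₀ hq1 ht0.ne'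
    omega
  have hqn1 : 0 < q ^ n - 1 := by
    have : 1 < q ^ n := one_lt_pow₀ hq1 hn.ne'
    omega
  have hqt_pos : 0 < q ^ t := pow_pos hq0 t
  have hqn_pos : 0 < q ^ n := pow_pos hq0 n
  -- the linear maps x ↦ x^{q^D} - a x
  set lm : ℕ → K → (K →ₗ[Fq] K) := fun D a => powL Fq K D - LinearMap.mulLeft Fq a with hlmdef
  have hlm : ∀ D (a x : K), lm D a x = x ^ q ^ D - a * x := by
    intro D a x
    simp [hlmdef, powL_apply, hcard]
  -- membership functions
  have hEadd : ∀ r : ℕ, ∀ x y : K, (x + y) ^ q ^ r = x ^ q ^ r + y ^ q ^ r := by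
    intro r x y
    have := aux_add_pow (Fq := Fq) x y r
    rwa [hcard] at this
  -- the subfield F_{q^n} (as a set)
  set E : Set K := {x : K | x ^ q ^ n = x} with hEdef
  have hE1 : (1 : K) ∈ E := by simp [hEdef]
  have hE0 : (0 : K) ∈ E := by simp [hEdef, pow_eq_zero_iff, (pow_pos hq0 n).ne', hq0.ne']
  -- every α i is β * (element of E)
  have hαE : ∀ i, ∃ y : K, y ^ q ^ n = y ∧ α i = β * y := by
    intro i
    have hmem : α i ∈ (Submodule.span Fq (Set.range α) : Set K) :=
      Submodule.subset_span (Set.mem_range_self i)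
    rw [hspan] at hmem
    obtain ⟨y, hy, hxy⟩ := hmem
    exact ⟨y, hy, hxy.symm⟩
  set xi : Fin n → K := fun i => Lβ⁻¹ * (α i) ^ P with hxidef
  have hαxi : ∀ i, (α i) ^ P = Lβ * xi i := by
    intro i
    rw [hxidef]
    simp [mul_inv_cancel_left₀ hLβ]
  have hxiE : ∀ i, xi i ∈ E := by
    intro i
    obtain ⟨y, hy, hxy⟩ := hαE i
    have : xi i = y ^ P := by
      rw [hxidef]
      simp only [hxy, mul_pow, hLβdef]
      rw [inv_mul_cancel_left₀ hLβ]
    rw [hEdef, Set.mem_setOf_eq, this, ← pow_mul, mul_comm, pow_mul, hy]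
  -- cardinality of E
  have hEround : E = insert (0 : K) {x : K | x ^ (q ^ n - 1) = 1} := by
    ext x
    constructor
    · intro hx
      rcases eq_or_ne x 0 with rfl | hx0
      · exact Set.mem_insert _ _
      · refine Set.mem_insert_of_mem _ ?_
        have : x ^ (q ^ n - 1) * x = 1 * x := by
          rw [one_mul, ← pow_succ, Nat.sub_add_cancel hqn_pos]
          exact hx
        exact mul_right_cancel₀ hx0 this
    · intro hx
      rcases hx with rfl | hx
      · exact hE0
      · have : x ^ (q ^ n) = x ^ (q ^ n - 1) * x := by
          rw [← pow_succ, Nat.sub_add_cancel hqn_pos]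
        rw [hEdef, Set.mem_setOf_eq, this, hx, one_mul]
  have hEcard : Set.ncard E = q ^ n := by
    have h0 : (0 : K) ∉ {x : K | x ^ (q ^ n - 1) = 1} := by
      simp [zero_pow hqn1.ne']
    have hle : Set.ncard {x : K | x ^ (q ^ n - 1) = 1} ≤ q ^ n - 1 := card_root_le hqn1 1
    have hge : q ^ n - 1 ≤ Set.ncard {x : K | x ^ (q ^ n - 1) = 1} := by
      have := card_root_one_ge (K := K) hqn1 (by rw [hcardK]; exact hdvd_nm)
      exact this
    have heq : Set.ncard {x : K | x ^ (q ^ n - 1) = 1} = q ^ n - 1 := le_antisymm hle hge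
    rw [hEround, Set.ncard_insert_of_notMem h0 (Set.toFinite _), heq]
    omega
  -- E as a submodule
  set Esub : Submodule Fq K := LinearMap.ker (lm n 1) with hEsubdef
  have hEsub_mem : ∀ x : K, x ∈ Esub ↔ x ∈ E := by
    intro x
    rw [hEsubdef, LinearMap.mem_ker, hlm, one_mul, sub_eq_zero, hEdef, Set.mem_setOf_eq]
  have hEsub_set : (Esub : Set K) = E := Set.ext hEsub_mem
  -- Finset versions
  set SE : Finset K := (Set.toFinite E).toFinset with hSEdef
  have hSE_mem : ∀ x, x ∈ SE ↔ x ∈ E := fun x => Set.Finite.mem_toFinset _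
  have hSE_coe : (SE : Set K) = E := Set.Finite.coe_toFinset _
  have hSE_card : SE.card = q ^ n := by
    rw [← Set.ncard_coe_finset, hSE_coe, hEcard]
  set S0 : Finset K := SE.erase 0 with hS0def
  have hS0_card : S0.card = q ^ n - 1 := by
    rw [hS0def, Finset.card_erase_of_mem ((hSE_mem 0).mpr hE0), hSE_card]
  set A : Finset K := S0.image (fun u => u ^ (q ^ t - 1)) with hAdef
  have hAcard : (q ^ n - 1) / (q ^ t - 1) ≤ A.card := by
    have hfib : S0.card ≤ (q ^ t - 1) * A.card := by
      apply Finset.card_le_mul_card_image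
      intro a _
      have hsub2 : ((S0.filter (fun u => u ^ (q ^ t - 1) = a)) : Set K)
          ⊆ {x : K | x ^ (q ^ t - 1) = a} := by
        intro x hx
        simp only [Finset.coe_filter, Set.mem_setOf_eq] at hx ⊢
        exact hx.2
      calc (S0.filter fun u => u ^ (q ^ t - 1) = a).card
          = Set.ncard ((S0.filter fun u => u ^ (q ^ t - 1) = a) : Set K) :=
            (Set.ncard_coe_finset _).symm
        _ ≤ Set.ncard {x : K | x ^ (q ^ t - 1) = a} := Set.ncard_le_ncard hsub2 (Set.toFinite _)
        _ ≤ q ^ t - 1 := card_root_le hqt1 a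
    calc (q ^ n - 1) / (q ^ t - 1) = S0.card / (q ^ t - 1) := by rw [hS0_card]
      _ ≤ ((q ^ t - 1) * A.card) / (q ^ t - 1) := Nat.div_le_div_right hfib
      _ = A.card := Nat.mul_div_cancel_left _ hqt1
  -- the word and the codewords
  set w : Fin n → K := fun i => Lβ * (xi i) ^ q ^ t with hwdef
  set cw : K → (Fin n → K) := fun a i => a * (α i) ^ P with hcwdef
  have hcwC : ∀ a : K, cw a ∈ C := by
    intro a
    rw [hC]
    exact ⟨fun x => a * x ^ P, hGab ⟨a, fun x => rfl⟩, rfl⟩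
  have hwc : ∀ (a : K) (i : Fin n), (w - cw a) i = Lβ * ((lm t a) (xi i)) := by
    intro a i
    have h1 : (a : K) * (α i) ^ P = a * (Lβ * xi i) := by rw [hαxi]
    simp only [Pi.sub_apply, hwdef, hcwdef, hlm]
    rw [h1]; ring
  -- multiplicative closure of E
  have hEmul : ∀ x ∈ E, ∀ y ∈ E, x * y ∈ E := by
    intro x hx y hy
    simp only [hEdef, Set.mem_setOf_eq] at hx hy ⊢
    rw [mul_pow, hx, hy]
  -- elements of FT
  have hFT_pow : ∀ c : K, c ^ (q ^ t - 1) = 1 → c ^ q ^ t = c := by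
    intro c hc
    have : c ^ q ^ t = c ^ (q ^ t - 1) * c := by
      rw [← pow_succ, Nat.sub_add_cancel hqt_pos]
    rw [this, hc, one_mul]
  have hFT_E : ∀ c : K, c ^ q ^ t = c → c ∈ E := by
    intro c hc
    obtain ⟨k, hk⟩ := htn
    have hiter : ∀ l : ℕ, c ^ (q ^ t) ^ l = c := by
      intro l
      induction l with
      | zero => simp
      | succ l ih => rw [pow_succ, pow_mul, ih, hc]
    simp only [hEdef, Set.mem_setOf_eq]
    rw [hk, pow_mul]
    exact hiter k
  -- the rank bound
  have hball : ∀ u : K, u ∈ S0 → rkw Fq (w - cw (u ^ (q ^ t - 1))) ≤ n - t := by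
    intro u hu
    have huE : u ∈ E := (hSE_mem u).mp (Finset.mem_of_mem_erase hu)
    have hu0 : u ≠ 0 := Finset.ne_of_mem_erase hu
    set a : K := u ^ (q ^ t - 1) with hadef
    have hua : u ^ q ^ t = a * u := by
      rw [hadef, ← pow_succ, Nat.sub_add_cancel hqt_pos]
    -- counting the image of E under x ↦ x^{q^t} - a x
    set IM : Finset K := SE.image (fun x => (lm t a) x) with hIMdef
    have hIMcard : IM.card ≤ q ^ (n - t) := by
      have hmul : q ^ t * IM.card ≤ SE.card := by
        apply Finset.mul_card_image_le_card
        intro b hb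
        obtain ⟨e, he, heb⟩ := Finset.mem_image.mp hb
        have heE : e ∈ E := (hSE_mem e).mp he
        -- the fiber over b contains e + u * c for c ∈ {0} ∪ FT
        set FTf : Finset K := insert (0 : K)
          ((Set.toFinite {x : K | x ^ (q ^ t - 1) = 1}).toFinset) with hFTfdef
        have hFTf_card : q ^ t ≤ FTf.card := by
      
          have h0 : (0 : K) ∉ (Set.toFinite {x : K | x ^ (q ^ t - 1) = 1}).toFinset := by
            simp [Set.Finite.mem_toFinset, zero_pow hqt1.ne']
          rw [hFTfdef, Finset.card_insert_of_notMem h0]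
          have : q ^ t - 1 ≤ ((Set.toFinite {x : K | x ^ (q ^ t - 1) = 1}).toFinset).card := by
            rw [← Set.ncard_coe_finset, Set.Finite.coe_toFinset]
            exact card_root_one_ge hqt1 (by rw [hcardK]; exact hdvd_tm)
          omega
        have hmapsto : ∀ c ∈ FTf, e + u * c ∈ SE.filter (fun x => (lm t a) x = b) := by
          intro c hc
          have hcE : c ∈ E ∧ c ^ q ^ t = c := by
            rcases Finset.mem_insert.mp hc with rfl | hc
            · exact ⟨hE0, by simp [zero_pow hqt_pos.ne']⟩
            · rw [Set.Finite.mem_toFinset] at hc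
              have := hFT_pow c hc
              exact ⟨hFT_E c this, this⟩
          have hucE : u * c ∈ E := hEmul u huE c hcE.1
          have hsumE : e + u * c ∈ E := by
            simp only [hEdef, Set.mem_setOf_eq] at heE hucE ⊢
            rw [hEadd n, heE, hucE]
          refine Finset.mem_filter.mpr ⟨(hSE_mem _).mpr hsumE, ?_⟩
          have hval : (lm t a) (e + u * c) = b := by
            rw [hlm, hEadd t, mul_pow, hcE.2, hua]
            rw [hlm] at heb
            rw [← heb]
            ring
          exact hval
        have hinj : Set.InjOn (fun c => e + u * c) (FTf : Set K) := by
          intro c1 _ c2 _ h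
          simp only at h
          exact mul_left_cancel₀ hu0 (add_left_cancel h)
        calc q ^ t ≤ FTf.card := hFTf_card
          _ ≤ (SE.filter (fun x => (lm t a) x = b)).card :=
              Finset.card_le_card_of_injOn _ hmapsto hinj
      have : q ^ t * IM.card ≤ q ^ t * q ^ (n - t) := by
        rw [hSE_card] at hmul
        calc q ^ t * IM.card ≤ q ^ n := hmul
          _ = q ^ t * q ^ (n - t) := by rw [← pow_add, Nat.add_sub_cancel' htn']
      exact Nat.le_of_mul_le_mul_left this hqt_pos
    -- the submodule of values
    set Ra : Submodule Fq K := Submodule.map (lm t a) Esub with hRadef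
    have hRa_set : (Ra : Set K) = (IM : Set K) := by
      rw [hRadef, Submodule.map_coe, hIMdef, Finset.coe_image, hSE_coe, hEsub_set]
    have hRa_card : Nat.card ↥Ra = IM.card := by
      rw [← Set.ncard_coe_finset, ← hRa_set, ← Nat.card_coe_set_eq]
      rfl
    have hRa_rank : Module.finrank Fq ↥Ra ≤ n - t := by
      letI : Fintype ↥Ra := Fintype.ofFinite _
      have hcardRa : Fintype.card ↥Ra = q ^ Module.finrank Fq ↥Ra := by
        rw [Module.card_eq_pow_finrank (K := Fq) (V := ↥Ra), hcard]
      have : q ^ Module.finrank Fq ↥Ra ≤ q ^ (n - t) := by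
        rw [← hcardRa, ← Nat.card_eq_fintype_card, hRa_card]
        exact hIMcard
      exact (pow_le_pow_iff_right₀ hq1).mp this
    set Sa : Submodule Fq K := Submodule.map (LinearMap.mulLeft Fq Lβ) Ra with hSadef
    have hspan_le : Submodule.span Fq (Set.range (w - cw a)) ≤ Sa := by
      rw [Submodule.span_le]
      rintro _ ⟨i, rfl⟩
      rw [hwc a i]
      exact ⟨(lm t a) (xi i),
        Submodule.mem_map_of_mem ((hEsub_mem _).mpr (hxiE i)), rfl⟩
    calc rkw Fq (w - cw a) ≤ Module.finrank Fq ↥Sa := Submodule.finrank_mono hspan_le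
      _ ≤ Module.finrank Fq ↥Ra := Submodule.finrank_map_le _ _
      _ ≤ n - t := hRa_rank
  
  -- w differs from every monomial codeword
  have hwne : ∀ a : K, w ≠ cw a := by
    intro a hwa
    have hxi_li : LinearIndependent Fq xi := by
      have hinj : Function.Injective
          ((LinearMap.mulLeft Fq Lβ⁻¹).comp (powL Fq K (s * j))) := by
        intro x y h
        simp only [LinearMap.coe_comp, Function.comp_apply, LinearMap.mulLeft_apply] at h
        exact powL_injective (s * j) (mul_left_cancel₀ (inv_ne_zero hLβ) h)
      have hxieq : xi = ((LinearMap.mulLeft Fq Lβ⁻¹).comp (powL Fq K (s * j))) ∘ α := by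
        funext i
        simp [hxidef, powL_apply, hcard, ← hP]
      rw [hxieq]
      exact hα.map' _ (LinearMap.ker_eq_bot.mpr hinj)
    have hker : ∀ i, xi i ∈ LinearMap.ker (lm t a) := by
      intro i
      have h0 : (w - cw a) i = 0 := by rw [hwa]; simp
      rw [hwc a i] at h0
      exact LinearMap.mem_ker.mpr ((mul_eq_zero.mp h0).resolve_left hLβ)
    have hsp : Submodule.span Fq (Set.range xi) ≤ LinearMap.ker (lm t a) := by
      rw [Submodule.span_le]
      rintro _ ⟨i, rfl⟩
      exact hker i
    have hfr : Module.finrank Fq ↥(Submodule.span Fq (Set.range xi)) = n := by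
      rw [finrank_span_eq_card hxi_li, Fintype.card_fin]
    letI : Fintype ↥(Submodule.span Fq (Set.range xi)) := Fintype.ofFinite _
    have hcard_span : Nat.card ↥(Submodule.span Fq (Set.range xi)) = q ^ n := by
      rw [Nat.card_eq_fintype_card, Module.card_eq_pow_finrank (K := Fq), hcard, hfr]
    have hker_sub : ((LinearMap.ker (lm t a) : Submodule Fq K) : Set K)
        ⊆ insert (0 : K) {x : K | x ^ (q ^ t - 1) = a} := by
      intro x hx
      rcases eq_or_ne x 0 with rfl | hx0
      · exact Set.mem_insert _ _
      · refine Set.mem_insert_of_mem _ ?_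
        have hx2 := LinearMap.mem_ker.mp hx
        rw [hlm, sub_eq_zero] at hx2
        have h2 : x ^ (q ^ t - 1) * x = a * x := by
          rw [← pow_succ, Nat.sub_add_cancel hqt_pos]; exact hx2
        exact mul_right_cancel₀ hx0 h2
    have hcard_ker : Set.ncard ((LinearMap.ker (lm t a) : Submodule Fq K) : Set K) ≤ q ^ t := by
      calc Set.ncard ((LinearMap.ker (lm t a) : Submodule Fq K) : Set K)
          ≤ Set.ncard (insert (0 : K) {x : K | x ^ (q ^ t - 1) = a}) :=
            Set.ncard_le_ncard hker_sub (Set.toFinite _)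
        _ ≤ 1 + Set.ncard {x : K | x ^ (q ^ t - 1) = a} := by
            have := Set.ncard_insert_le (0 : K) {x : K | x ^ (q ^ t - 1) = a}
            omega
        _ ≤ 1 + (q ^ t - 1) := by
            have := card_root_le (K := K) hqt1 a; omega
        _ = q ^ t := by omega
    have hcon : q ^ n ≤ q ^ t := by
      calc q ^ n = Nat.card ↥(Submodule.span Fq (Set.range xi)) := hcard_span.symm
        _ = Set.ncard ((Submodule.span Fq (Set.range xi) : Submodule Fq K) : Set K) := by
            rw [← Nat.card_coe_set_eq]; rfl
        _ ≤ Set.ncard ((LinearMap.ker (lm t a) : Submodule Fq K) : Set K) :=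
            Set.ncard_le_ncard (fun x hx => hsp hx) (Set.toFinite _)
        _ ≤ q ^ t := hcard_ker
    have hlt : q ^ t < q ^ n := pow_lt_pow_right₀ hq1 htln
    omega
  refine ⟨w, ?_, ?_⟩
  · -- w ∉ C
    intro hwC
    have h1A : rkw Fq (w - cw ((1 : K) ^ (q ^ t - 1))) ≤ n - t := by
      apply hball
      exact Finset.mem_erase.mpr ⟨one_ne_zero, (hSE_mem 1).mpr hE1⟩
    rw [one_pow] at h1A
    have hdle : d ≤ n - t := by
      rw [hd]
      exact le_trans (Nat.sInf_le ⟨w, hwC, cw 1, hcwC 1, hwne 1, rfl⟩) h1A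
    have hcast : (d : ℤ) ≤ (n : ℤ) - t := by
      have := Nat.cast_le (α := ℤ) |>.mpr hdle
      rwa [Nat.cast_sub htn'] at this
    omega
  · -- counting
    have hinj : Function.Injective (fun (a : {x // x ∈ A}) =>
        (⟨cw a.1, ⟨hcwC a.1, by
          obtain ⟨u, hu, hua⟩ := Finset.mem_image.mp a.2
          rw [← hua]
          exact hball u hu⟩⟩ : ↥(C ∩ ball Fq w (n - t)))) := by
      intro a1 a2 h
      simp only [Subtype.mk_eq_mk] at h
      apply Subtype.ext
      have h0 := congrFun (congrArg Subtype.val h) (⟨0, hn⟩ : Fin n)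
      simp only [hcwdef] at h0
      exact mul_right_cancel₀ (pow_ne_zero _ (hα.ne_zero ⟨0, hn⟩)) h0
    calc (q ^ n - 1) / (q ^ t - 1) ≤ A.card := hAcard
      _ = Nat.card {x // x ∈ A} := by rw [Nat.card_eq_fintype_card, Fintype.card_coe]
      _ ≤ Nat.card ↥(C ∩ ball Fq w (n - t)) := Nat.card_le_card_of_injective _ hinj
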